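/- arXiv:2109.03844 — 2 statements merged into one kernel-verified Lean document; each statement's English description precedes it below -/
import Mathlib

section
/- Let Z₁ and Z₂ be independent standard normal random variables, let δ ∈ (−1,1) and set λ = δ/√(1−δ²). Then the random variable X = δ|Z₁| + √(1−δ²) Z₂ has the skew-normal density 2φ(x)Φ(λx); that is, for every t ∈ ℝ, P(X ≤ t) = ∫_{−∞}^t 2 φ(x) Φ(λ x) dx. -/
open Real MeasureTheory Set ProbabilityTheory
open scoped ENNReal NNReal

/-- Standard normal PDF. -/
noncomputable def stdPhi (x : ℝ) : ℝ := (Real.sqrt (2 * Real.pi))⁻¹ * Real.exp (-x ^ 2 / 2)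

/-- Standard normal CDF. -/
noncomputable def stdPhiCDF (x : ℝ) : ℝ := ∫ t in Set.Iic x, stdPhi t


lemma stdPhi_nonneg (x : ℝ) : 0 ≤ stdPhi x := by unfold stdPhi; positivity

lemma stdPhi_eq_gaussian : stdPhi = gaussianPDFReal 0 1 := by
  funext x
  simp [stdPhi, gaussianPDFReal]

lemma continuous_stdPhi : Continuous stdPhi := by
  unfold stdPhi; fun_prop

lemma integrable_stdPhi : Integrable stdPhi := by
  rw [stdPhi_eq_gaussian]; exact integrable_gaussianPDFReal 0 1

lemma integral_stdPhi : ∫ x, stdPhi x = 1 := by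
  rw [stdPhi_eq_gaussian]; exact integral_gaussianPDFReal_eq_one 0 one_ne_zero

lemma stdPhiCDF_nonneg (x : ℝ) : 0 ≤ stdPhiCDF x :=
  integral_nonneg fun _ => stdPhi_nonneg _

lemma stdPhiCDF_le_one (x : ℝ) : stdPhiCDF x ≤ 1 := by
  rw [← integral_stdPhi]
  exact setIntegral_le_integral integrable_stdPhi
    (Filter.Eventually.of_forall fun y => stdPhi_nonneg y)

lemma monotone_stdPhiCDF : Monotone stdPhiCDF := by
  intro a b hab
  exact setIntegral_mono_set integrable_stdPhi.integrableOn
    (Filter.Eventually.of_forall fun y => stdPhi_nonneg y)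
    (HasSubset.Subset.eventuallyLE (Iic_subset_Iic.mpr hab))

lemma measurable_stdPhiCDF : Measurable stdPhiCDF := monotone_stdPhiCDF.measurable

lemma ofReal_stdPhiCDF (x : ℝ) :
    ENNReal.ofReal (stdPhiCDF x) = ∫⁻ y in Set.Iic x, ENNReal.ofReal (stdPhi y) :=
  ofReal_integral_eq_lintegral_ofReal integrable_stdPhi.integrableOn
    (Filter.Eventually.of_forall fun y => stdPhi_nonneg y)

lemma stdPhi_mul_stdPhi (a b : ℝ) :
    stdPhi a * stdPhi b
      = (Real.sqrt (2 * Real.pi))⁻¹ * (Real.sqrt (2 * Real.pi))⁻¹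
        * Real.exp (-(a ^ 2 + b ^ 2) / 2) := by
  unfold stdPhi
  rw [mul_mul_mul_comm, ← Real.exp_add,
    show -a ^ 2 / 2 + -b ^ 2 / 2 = -(a ^ 2 + b ^ 2) / 2 from by ring]

/-- a linear map of `ℝ × ℝ` with `|det| = 1` preserves volume. -/
lemma measurePreserving_linear {a b c d : ℝ} (h : |a * d - b * c| = 1) :
    MeasurePreserving (fun p : ℝ × ℝ => (a * p.1 + b * p.2, c * p.1 + d * p.2))
      volume volume := by
  set f := Matrix.toLin (Module.Basis.finTwoProd ℝ) (Module.Basis.finTwoProd ℝ) !![a, b; c, d] with hf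
  have hdet : LinearMap.det f = a * d - b * c := by
    rw [hf, LinearMap.det_toLin, Matrix.det_fin_two_of]
  have hne : LinearMap.det f ≠ 0 := by
    rw [hdet]; intro h0; rw [h0] at h; simp at h
  have hfun : (fun p : ℝ × ℝ => (a * p.1 + b * p.2, c * p.1 + d * p.2)) = f := by
    funext p
    rw [hf, Matrix.toLin_finTwoProd_apply]
  rw [hfun]
  refine ⟨f.continuous_of_finiteDimensional.measurable, ?_⟩
  have := Measure.map_linearMap_addHaar_eq_smul_addHaar (volume : Measure (ℝ × ℝ)) hne
  rw [this, hdet, abs_inv, h]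
  simp

lemma volume_prod_withDensity {f g : ℝ → ℝ≥0∞} (hf : Measurable f) (hg : Measurable g) :
    (volume.withDensity f).prod (volume.withDensity g)
      = ((volume : Measure ℝ).prod volume).withDensity fun p => f p.1 * g p.2 := by
  ext s hs
  have hD : Measurable fun p : ℝ × ℝ => f p.1 * g p.2 :=
    (hf.comp measurable_fst).mul (hg.comp measurable_snd)
  rw [withDensity_apply _ hs, ← lintegral_indicator hs,
    lintegral_prod _ (hD.indicator hs).aemeasurable, Measure.prod_apply hs]
  rw [lintegral_withDensity_eq_lintegral_mul _ hf (measurable_measure_prodMk_left hs)]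
  refine lintegral_congr fun x => ?_
  simp only [Pi.mul_apply]
  rw [withDensity_apply _ (measurable_prodMk_left hs),
    ← lintegral_indicator (measurable_prodMk_left hs),
    ← lintegral_const_mul _ (hg.indicator (measurable_prodMk_left hs))]
  refine lintegral_congr fun y => ?_
  by_cases hxy : (x, y) ∈ s
  · simp [Set.indicator, hxy]
  · simp [Set.indicator, hxy]

/-- if Z₁, Z₂ are independent standard normals, δ ∈ (−1,1) and
λ = δ/√(1−δ²), then X = δ|Z₁| + √(1−δ²) Z₂ has the skew-normal density 2φ(x)Φ(λx):
for every t, P(X ≤ t) = ∫_{−∞}^t 2 φ(x) Φ(λx) dx. -/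
theorem skewNormal_stochastic_representation
    {Ω : Type*} [MeasurableSpace Ω] (μ : Measure Ω) [IsProbabilityMeasure μ]
    (Z₁ Z₂ : Ω → ℝ) (hZ₁ : Measurable Z₁) (hZ₂ : Measurable Z₂)
    (hlaw₁ : Measure.map Z₁ μ = gaussianReal 0 1)
    (hlaw₂ : Measure.map Z₂ μ = gaussianReal 0 1)
    (hindep : IndepFun Z₁ Z₂ μ)
    (δ : ℝ) (hδ₁ : -1 < δ) (hδ₂ : δ < 1)
    (lam : ℝ) (hlam : lam = δ / Real.sqrt (1 - δ ^ 2)) :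
    ∀ t : ℝ,
      μ {ω | δ * |Z₁ ω| + Real.sqrt (1 - δ ^ 2) * Z₂ ω ≤ t}
        = ENNReal.ofReal (∫ x in Set.Iic t, 2 * stdPhi x * stdPhiCDF (lam * x)) := by
  intro t
  have hδsq : (0:ℝ) < 1 - δ ^ 2 := by nlinarith
  set c : ℝ := Real.sqrt (1 - δ ^ 2) with hcdef
  have hc : 0 < c := Real.sqrt_pos.mpr hδsq
  have hc0 : c ≠ 0 := hc.ne'
  have hc2 : c ^ 2 = 1 - δ ^ 2 := Real.sq_sqrt hδsq.le
  have hlamc : c * lam = δ := by rw [hlam]; field_simp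
  set D : ℝ × ℝ → ℝ≥0∞ := fun p => ENNReal.ofReal (stdPhi p.1 * stdPhi p.2) with hDdef
  have hDmeas : Measurable D := by
    apply Measurable.ennreal_ofReal
    exact ((continuous_stdPhi.comp continuous_fst).mul
      (continuous_stdPhi.comp continuous_snd)).measurable
  set S : Set (ℝ × ℝ) := {p | δ * |p.1| + c * p.2 ≤ t} with hSdef
  set B : Set (ℝ × ℝ) := {p | p.1 ≤ t ∧ p.2 ≤ lam * p.1} with hBdef
  set A : Set (ℝ × ℝ) := S ∩ {p | 0 ≤ p.1} with hAdef
  have hSm : MeasurableSet S := by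
    have : Continuous fun p : ℝ × ℝ => δ * |p.1| + c * p.2 := by fun_prop
    exact measurableSet_le this.measurable measurable_const
  have hBm : MeasurableSet B := by
    apply MeasurableSet.inter
    · exact measurableSet_le measurable_fst measurable_const
    · exact measurableSet_le measurable_snd (measurable_fst.const_mul lam)
  have hAm : MeasurableSet A :=
    hSm.inter (measurableSet_le measurable_const measurable_fst)
  -- step 1 : LHS as an integral of the product density over S
  have hζ : Measurable fun ω => (Z₁ ω, Z₂ ω) := hZ₁.prodMk hZ₂
  have hmap : μ.map (fun ω => (Z₁ ω, Z₂ ω)) = (gaussianReal 0 1).prod (gaussianReal 0 1) := by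
    rw [(indepFun_iff_map_prod_eq_prod_map_map hZ₁.aemeasurable hZ₂.aemeasurable).mp hindep,
      hlaw₁, hlaw₂]
  have hprodD : (gaussianReal 0 1).prod (gaussianReal 0 1)
      = (volume : Measure (ℝ × ℝ)).withDensity D := by
    rw [gaussianReal_of_var_ne_zero 0 one_ne_zero,
      volume_prod_withDensity (measurable_gaussianPDF 0 1) (measurable_gaussianPDF 0 1),
      ← Measure.volume_eq_prod ℝ ℝ]
    congr 1
    funext p
    rw [hDdef]
    simp only [gaussianPDF, ← stdPhi_eq_gaussian]
    rw [← ENNReal.ofReal_mul (stdPhi_nonneg _)]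
  have h1 : μ {ω | δ * |Z₁ ω| + c * Z₂ ω ≤ t} = ∫⁻ p in S, D p := by
    have hpre : {ω | δ * |Z₁ ω| + c * Z₂ ω ≤ t} = (fun ω => (Z₁ ω, Z₂ ω)) ⁻¹' S := rfl
    rw [hpre, ← Measure.map_apply hζ hSm, hmap, hprodD, withDensity_apply _ hSm]
  -- generic change of variables step
  have hcomp : ∀ (G : ℝ × ℝ → ℝ × ℝ), MeasurePreserving G volume volume →
      (∀ p, D (G p) = D p) → ∀ (E : Set (ℝ × ℝ)), MeasurableSet E →
      (∫⁻ p in E, D p) = ∫⁻ p in G ⁻¹' E, D p := by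
    intro G hG hDG E hE
    rw [← lintegral_indicator hE, ← lintegral_indicator (hG.measurable hE),
      ← hG.lintegral_comp (hDmeas.indicator hE)]
    refine lintegral_congr fun p => ?_
    by_cases hp : G p ∈ E
    · simp [Set.indicator, hp, hDG]
    · simp [Set.indicator, hp]
  -- step 2 : symmetry in the first coordinate
  have hRpres : MeasurePreserving (fun p : ℝ × ℝ => (-p.1, p.2)) volume volume := by
    have h := measurePreserving_linear (a := -1) (b := 0) (c := 0) (d := 1) (by norm_num)
    simpa using h
  have hDR : ∀ p : ℝ × ℝ, D (-p.1, p.2) = D p := by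
    intro p; simp [hDdef, stdPhi, neg_sq]
  have hm2 : MeasurableSet (S ∩ {p : ℝ × ℝ | p.1 < 0}) :=
    hSm.inter (measurableSet_lt measurable_fst measurable_const)
  have hRinv : (fun p : ℝ × ℝ => (-p.1, p.2)) ⁻¹' (S ∩ {p | p.1 < 0})
      = S ∩ {p : ℝ × ℝ | 0 < p.1} := by
    ext p
    simp [hSdef, abs_neg, neg_lt_zero]
  have hnullline : (volume : Measure (ℝ × ℝ)) {p : ℝ × ℝ | p.1 = 0} = 0 := by
    have hsub : {p : ℝ × ℝ | p.1 = 0} ⊆ ({0} : Set ℝ) ×ˢ (Set.univ : Set ℝ) :=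
      fun p hp => ⟨hp, trivial⟩
    refine measure_mono_null hsub ?_
    rw [Measure.volume_eq_prod ℝ ℝ, Measure.prod_prod]
    simp
  have haeAS : (S ∩ {p : ℝ × ℝ | 0 < p.1} : Set (ℝ × ℝ)) =ᵐ[volume] A := by
    rw [MeasureTheory.ae_eq_set]
    constructor
    · refine measure_mono_null (fun p hp => ?_) measure_empty
      have hp0 : 0 < p.1 := hp.1.2
      exact absurd (show p ∈ A from ⟨hp.1.1, hp0.le⟩) hp.2
    · refine measure_mono_null ?_ hnullline
      rintro p ⟨⟨hpS, hp0⟩, hnp⟩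
      by_contra hne
      exact hnp ⟨hpS, lt_of_le_of_ne hp0 (Ne.symm hne)⟩
  have hS_split : (∫⁻ p in S, D p) = 2 * ∫⁻ p in A, D p := by
    have hcover : A ∪ (S ∩ {p : ℝ × ℝ | p.1 < 0}) = S := by
      rw [hAdef, ← Set.inter_union_distrib_left]
      have huniv : ({p : ℝ × ℝ | 0 ≤ p.1} ∪ {p : ℝ × ℝ | p.1 < 0}) = Set.univ := by
        ext p; simp [le_or_gt]
      rw [huniv, Set.inter_univ]
    have hdisj : Disjoint A (S ∩ {p : ℝ × ℝ | p.1 < 0}) := by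
      refine Set.disjoint_left.mpr fun p hp hp' => ?_
      have h1 : 0 ≤ p.1 := hp.2
      have h2 : p.1 < 0 := hp'.2
      linarith
    rw [← hcover, lintegral_union hm2 hdisj,
      hcomp _ hRpres hDR _ hm2, hRinv, setLIntegral_congr haeAS, two_mul]
  -- step 3 : rotation
  have hTpres : MeasurePreserving (fun p : ℝ × ℝ => (δ * p.1 + c * p.2, -c * p.1 + δ * p.2))
      volume volume := by
    have hdet : |δ * δ - c * (-c)| = 1 := by
      have : δ * δ - c * (-c) = 1 := by nlinarith [hc2]
      rw [this]; norm_num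
    exact measurePreserving_linear hdet
  have hDT : ∀ p : ℝ × ℝ, D (δ * p.1 + c * p.2, -c * p.1 + δ * p.2) = D p := by
    intro p
    rw [hDdef]
    simp only
    rw [stdPhi_mul_stdPhi, stdPhi_mul_stdPhi,
      show (δ * p.1 + c * p.2) ^ 2 + (-c * p.1 + δ * p.2) ^ 2 = p.1 ^ 2 + p.2 ^ 2 from by
        linear_combination (p.1 ^ 2 + p.2 ^ 2) * hc2]
  have hTinv : (fun p : ℝ × ℝ => (δ * p.1 + c * p.2, -c * p.1 + δ * p.2)) ⁻¹' B = A := by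
    ext p
    simp only [hBdef, hAdef, hSdef, Set.mem_preimage, Set.mem_inter_iff, Set.mem_setOf_eq]
    constructor
    · rintro ⟨h1, h2⟩
      have h2' : c * (-c * p.1 + δ * p.2) ≤ δ * (δ * p.1 + c * p.2) := by
        have h := mul_le_mul_of_nonneg_left h2 hc.le
        rwa [← mul_assoc, hlamc] at h
      have hu : 0 ≤ p.1 := by nlinarith [h2', hc2]
      refine ⟨?_, hu⟩
      rw [abs_of_nonneg hu]; linarith
    · rintro ⟨h1, hu⟩
      rw [abs_of_nonneg hu] at h1
      refine ⟨h1, ?_⟩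
      have h2' : c * (-c * p.1 + δ * p.2) ≤ c * (lam * (δ * p.1 + c * p.2)) := by
        rw [← mul_assoc, hlamc]
        nlinarith [hc2]
      exact le_of_mul_le_mul_left h2' hc
  have h3 : (∫⁻ p in B, D p) = ∫⁻ p in A, D p := by
    rw [hcomp _ hTpres hDT _ hBm, hTinv]
  -- step 4 : RHS as integral over B
  have hg_meas : Measurable fun x => 2 * stdPhi x * stdPhiCDF (lam * x) :=
    ((continuous_stdPhi.measurable.const_mul 2).mul
      (measurable_stdPhiCDF.comp (measurable_id.const_mul lam)))
  have hg_int : IntegrableOn (fun x => 2 * stdPhi x * stdPhiCDF (lam * x)) (Set.Iic t) := by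
    refine ((integrable_stdPhi.const_mul 2).restrict (s := Set.Iic t)).mono
      hg_meas.aestronglyMeasurable ?_
    filter_upwards with x
    have h1 := stdPhi_nonneg x
    have h2 := stdPhiCDF_nonneg (lam * x)
    have h3 := stdPhiCDF_le_one (lam * x)
    rw [Real.norm_eq_abs, Real.norm_eq_abs, abs_of_nonneg (by nlinarith),
      abs_of_nonneg (by nlinarith)]
    nlinarith
  have hg0 : 0 ≤ᵐ[volume.restrict (Set.Iic t)] fun x => 2 * stdPhi x * stdPhiCDF (lam * x) := by
    filter_upwards with x
    exact mul_nonneg (mul_nonneg (by norm_num) (stdPhi_nonneg x)) (stdPhiCDF_nonneg (lam * x))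
  have hB_iter : (∫⁻ p in B, D p)
      = ∫⁻ x in Set.Iic t, ENNReal.ofReal (stdPhi x * stdPhiCDF (lam * x)) := by
    rw [← lintegral_indicator hBm, Measure.volume_eq_prod ℝ ℝ,
      lintegral_prod _ (hDmeas.indicator hBm).aemeasurable,
      ← lintegral_indicator measurableSet_Iic]
    refine lintegral_congr fun x => ?_
    by_cases hx : x ≤ t
    · have hslice : ∀ y, B.indicator D (x, y)
          = (Set.Iic (lam * x)).indicator (fun y => D (x, y)) y := by
        intro y
        by_cases hy : y ≤ lam * x <;> simp [Set.indicator, hBdef, hx, hy]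
      calc ∫⁻ y, B.indicator D (x, y)
          = ∫⁻ y, (Set.Iic (lam * x)).indicator (fun y => D (x, y)) y :=
            lintegral_congr hslice
        _ = ∫⁻ y in Set.Iic (lam * x), D (x, y) := lintegral_indicator measurableSet_Iic _
        _ = ∫⁻ y in Set.Iic (lam * x), ENNReal.ofReal (stdPhi x) * ENNReal.ofReal (stdPhi y) := by
            refine lintegral_congr fun y => ?_
            rw [hDdef]
            exact ENNReal.ofReal_mul (stdPhi_nonneg x)
        _ = ENNReal.ofReal (stdPhi x) * ENNReal.ofReal (stdPhiCDF (lam * x)) := by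
            rw [lintegral_const_mul' _ _ ENNReal.ofReal_ne_top, ofReal_stdPhiCDF]
        _ = (Set.Iic t).indicator (fun x => ENNReal.ofReal (stdPhi x * stdPhiCDF (lam * x))) x := by
            rw [Set.indicator_of_mem (Set.mem_Iic.mpr hx), ENNReal.ofReal_mul (stdPhi_nonneg x)]
    · have hslice0 : ∀ y, B.indicator D (x, y) = 0 := by
        intro y; simp [Set.indicator, hBdef, hx]
      rw [lintegral_congr hslice0, lintegral_zero,
        Set.indicator_of_notMem (fun hmem => hx (Set.mem_Iic.mp hmem))]
  -- assemble
  calc μ {ω | δ * |Z₁ ω| + c * Z₂ ω ≤ t}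
      = ∫⁻ p in S, D p := h1
    _ = 2 * ∫⁻ p in A, D p := hS_split
    _ = 2 * ∫⁻ p in B, D p := by rw [h3]
    _ = 2 * ∫⁻ x in Set.Iic t, ENNReal.ofReal (stdPhi x * stdPhiCDF (lam * x)) := by
        rw [hB_iter]
    _ = ∫⁻ x in Set.Iic t, ENNReal.ofReal (2 * stdPhi x * stdPhiCDF (lam * x)) := by
        rw [← lintegral_const_mul' _ _ (by norm_num : (2:ℝ≥0∞) ≠ ⊤)]
        refine lintegral_congr fun x => ?_
        rw [mul_assoc, ENNReal.ofReal_mul (by norm_num : (0:ℝ) ≤ 2), ENNReal.ofReal_ofNat]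
    _ = ENNReal.ofReal (∫ x in Set.Iic t, 2 * stdPhi x * stdPhiCDF (lam * x)) :=
        (ofReal_integral_eq_lintegral_ofReal hg_int hg0).symm
end

section
/- Fix α > 0, λ ∈ ℝ, q ∈ (0,1), and Ξ > 0. Let Q ∈ ℝ satisfy ∫_{−∞}^{Q} 2 φ(x) Φ(λ x) dx = q, set η = αQ + √((αQ)² + 4) and β = 4Ξ/η². Then ∫_0^{Ξ} 2 φ(a(y;α,β)) Φ(λ a(y;α,β)) a'(y;α,β) dy = q. That is, in the quantile reparameterization skew-QBS(α,Ξ_q,λ) of the skew-BS distribution, the parameter Ξ_q is itself the 100q-th quantile of the distribution. -/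
open Real MeasureTheory Set

/-- The function a(y; α, β). -/
noncomputable def aBS (α β y : ℝ) : ℝ := (1 / α) * (Real.sqrt (y / β) - Real.sqrt (β / y))

/-- The derivative a'(y; α, β). -/
noncomputable def aBS' (α β y : ℝ) : ℝ :=
  (1 / (2 * α * y)) * (Real.sqrt (y / β) + Real.sqrt (β / y))

lemma aux_pos (c : ℝ) : 0 < c + Real.sqrt (c ^ 2 + 4) := by
  have h : |c| < Real.sqrt (c ^ 2 + 4) := by
    rw [← Real.sqrt_sq_eq_abs]
    exact Real.sqrt_lt_sqrt (sq_nonneg c) (by linarith)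
  have := neg_abs_le c
  linarith

lemma aux_mono {s t : ℝ} (h : s ≤ t) :
    s + Real.sqrt (s ^ 2 + 4) ≤ t + Real.sqrt (t ^ 2 + 4) := by
  have hs : Real.sqrt (s ^ 2 + 4) ^ 2 = s ^ 2 + 4 := Real.sq_sqrt (by positivity)
  have ht : Real.sqrt (t ^ 2 + 4) ^ 2 = t ^ 2 + 4 := Real.sq_sqrt (by positivity)
  have hsn : 0 ≤ Real.sqrt (s ^ 2 + 4) := Real.sqrt_nonneg _
  have htn : 0 ≤ Real.sqrt (t ^ 2 + 4) := Real.sqrt_nonneg _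
  have habs : -t ≤ Real.sqrt (t ^ 2 + 4) := by
    have h1 : |t| ≤ Real.sqrt (t ^ 2 + 4) := by
      rw [← Real.sqrt_sq_eq_abs]
      exact Real.sqrt_le_sqrt (by linarith)
    have := neg_abs_le t
    linarith
  nlinarith [sq_nonneg (Real.sqrt (s ^ 2 + 4) - Real.sqrt (t ^ 2 + 4)),
    sq_nonneg (Real.sqrt (s ^ 2 + 4) + Real.sqrt (t ^ 2 + 4)),
    mul_nonneg (by linarith : (0 : ℝ) ≤ Real.sqrt (t ^ 2 + 4) + t) (sub_nonneg.2 h)]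

lemma hasDerivAt_aBS {α β : ℝ} (hα : 0 < α) (hβ : 0 < β) {y : ℝ} (hy : 0 < y) :
    HasDerivAt (aBS α β) (aBS' α β y) y := by
  have h1 : HasDerivAt (fun y : ℝ => y / β) (1 / β) y := by
    simpa using (hasDerivAt_id y).div_const β
  have hyβ : y / β ≠ 0 := ne_of_gt (div_pos hy hβ)
  have hsq1 : HasDerivAt (fun y : ℝ => Real.sqrt (y / β))
      (1 / (2 * Real.sqrt (y / β)) * (1 / β)) y :=
    (Real.hasDerivAt_sqrt hyβ).comp y h1
  have h2 : HasDerivAt (fun y : ℝ => β / y) (β * -(y ^ 2)⁻¹) y := by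
    simpa [div_eq_mul_inv] using (hasDerivAt_inv hy.ne').const_mul β
  have hβy : β / y ≠ 0 := ne_of_gt (div_pos hβ hy)
  have hsq2 : HasDerivAt (fun y : ℝ => Real.sqrt (β / y))
      (1 / (2 * Real.sqrt (β / y)) * (β * -(y ^ 2)⁻¹)) y :=
    (Real.hasDerivAt_sqrt hβy).comp y h2
  have key : aBS' α β y = (1 / α) * (1 / (2 * Real.sqrt (y / β)) * (1 / β) -
      1 / (2 * Real.sqrt (β / y)) * (β * -(y ^ 2)⁻¹)) := by
    rw [aBS', Real.sqrt_div hy.le, Real.sqrt_div hβ.le]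
    have hsy : Real.sqrt y ^ 2 = y := Real.sq_sqrt hy.le
    have hsb : Real.sqrt β ^ 2 = β := Real.sq_sqrt hβ.le
    have hsy0 : 0 < Real.sqrt y := Real.sqrt_pos.2 hy
    have hsb0 : 0 < Real.sqrt β := Real.sqrt_pos.2 hβ
    field_simp
    linear_combination (y * β - β ^ 2) * hsy +
      (y * β - y ^ 2) * hsb
  rw [key]
  exact (hsq1.sub hsq2).const_mul (1 / α)

set_option maxHeartbeats 1000000 in
/-- in the quantile reparameterization skew-QBS(α, Ξ_q, λ), with
β = 4Ξ/η² and η = αQ + √((αQ)² + 4) where Q is the q-quantile of SN(λ), the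
parameter Ξ is itself the 100q-th quantile of the distribution:
∫_0^Ξ 2 φ(a(y;α,β)) Φ(λ a(y;α,β)) a'(y;α,β) dy = q. -/
theorem skewQBS_quantile_param (α lam q Ξ Q : ℝ) (hα : 0 < α) (hΞ : 0 < Ξ)
    (hq₁ : 0 < q) (hq₂ : q < 1)
    (hQ : ∫ x in Set.Iic Q, 2 * stdPhi x * stdPhiCDF (lam * x) = q) :
    ∫ y in Set.Ioc (0 : ℝ) Ξ,
        2 * stdPhi (aBS α (4 * Ξ / (α * Q + Real.sqrt ((α * Q) ^ 2 + 4)) ^ 2) y) *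
          stdPhiCDF (lam * aBS α (4 * Ξ / (α * Q + Real.sqrt ((α * Q) ^ 2 + 4)) ^ 2) y) *
          aBS' α (4 * Ξ / (α * Q + Real.sqrt ((α * Q) ^ 2 + 4)) ^ 2) y = q := by
  set η : ℝ := α * Q + Real.sqrt ((α * Q) ^ 2 + 4) with hηdef
  have hη : 0 < η := aux_pos (α * Q)
  set β : ℝ := 4 * Ξ / η ^ 2 with hβdef
  have hβ : 0 < β := by positivity
  have hsη : Real.sqrt ((α * Q) ^ 2 + 4) ^ 2 = (α * Q) ^ 2 + 4 := Real.sq_sqrt (by positivity)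
  have hηQ : η ^ 2 = 2 * (α * Q) * η + 4 := by
    rw [hηdef]; nlinarith [hsη]
  -- derivative facts
  have hd : ∀ y ∈ Set.Ioc (0 : ℝ) Ξ, HasDerivAt (aBS α β) (aBS' α β y) y :=
    fun y hy => hasDerivAt_aBS hα hβ hy.1
  have hpos : ∀ y ∈ Set.Ioc (0 : ℝ) Ξ, 0 < aBS' α β y := by
    intro y hy
    have h1 : 0 < Real.sqrt (y / β) := Real.sqrt_pos.2 (div_pos hy.1 hβ)
    have h2 : 0 ≤ Real.sqrt (β / y) := Real.sqrt_nonneg _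
    have h0 : 0 < 2 * α * y := by
      have := mul_pos (mul_pos two_pos hα) hy.1
      linarith [this]
    rw [aBS']
    exact mul_pos (one_div_pos.2 h0) (by linarith)
  have hcont : ContinuousOn (aBS α β) (Set.Ioc (0 : ℝ) Ξ) :=
    fun y hy => ((hd y hy).continuousAt).continuousWithinAt
  have hmono : StrictMonoOn (aBS α β) (Set.Ioc (0 : ℝ) Ξ) := by
    apply strictMonoOn_of_deriv_pos (convex_Ioc _ _) hcont
    intro y hy
    rw [interior_Ioc] at hy
    have hy' : y ∈ Set.Ioc (0 : ℝ) Ξ := ⟨hy.1, hy.2.le⟩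
    rw [(hd y hy').deriv]
    exact hpos y hy'
  -- a(Ξ) = Q
  have haΞ : aBS α β Ξ = Q := by
    have e1 : Ξ / β = (η / 2) ^ 2 := by
      rw [hβdef]; field_simp; ring
    have e2 : β / Ξ = (2 / η) ^ 2 := by
      rw [hβdef]; field_simp; ring
    rw [aBS, e1, e2, Real.sqrt_sq (by positivity), Real.sqrt_sq (by positivity)]
    field_simp
    linear_combination hηQ
  -- image of Ioc 0 Ξ is Iic Q
  have himg : aBS α β '' Set.Ioc (0 : ℝ) Ξ = Set.Iic Q := by
    ext x
    constructor
    · rintro ⟨y, hy, rfl⟩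
      have hΞmem : Ξ ∈ Set.Ioc (0 : ℝ) Ξ := ⟨hΞ, le_refl Ξ⟩
      have := hmono.monotoneOn hy hΞmem hy.2
      rw [haΞ] at this
      exact this
    · intro hx
      set u : ℝ := (α * x + Real.sqrt ((α * x) ^ 2 + 4)) / 2 with hudef
      have hu : 0 < u := by
        have := aux_pos (α * x)
        rw [hudef]; linarith
      have hsx : Real.sqrt ((α * x) ^ 2 + 4) ^ 2 = (α * x) ^ 2 + 4 :=
        Real.sq_sqrt (by positivity)
      have huq : u ^ 2 = α * x * u + 1 := by
        rw [hudef]; nlinarith [hsx]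
      have h2u : 2 * u ≤ η := by
        have := aux_mono (mul_le_mul_of_nonneg_left hx hα.le)
        rw [hudef, hηdef]; linarith
      have hβη : β * η ^ 2 = 4 * Ξ := by
        rw [hβdef]; field_simp
      have h4 : 4 * u ^ 2 ≤ η ^ 2 := by nlinarith [hu, hη]
      refine ⟨β * u ^ 2, ⟨by positivity, ?_⟩, ?_⟩
      · nlinarith [mul_le_mul_of_nonneg_left h4 hβ.le, hβη]
      · have e1 : β * u ^ 2 / β = u ^ 2 := by field_simp
        have e2 : β / (β * u ^ 2) = (u⁻¹) ^ 2 := by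
          rw [eq_comm]; field_simp
        rw [aBS, e1, e2, Real.sqrt_sq hu.le, Real.sqrt_sq (by positivity)]
        field_simp
        linear_combination huq
  -- change of variables
  rw [← hQ, ← himg,
    integral_image_eq_integral_abs_deriv_smul measurableSet_Ioc
      (fun y hy => (hd y hy).hasDerivWithinAt) hmono.injOn]
  apply setIntegral_congr_fun measurableSet_Ioc
  intro y hy
  simp only [smul_eq_mul, abs_of_pos (hpos y hy)]
  ring
end
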